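/- arXiv:2503.05245 — 2 statements merged into one kernel-verified Lean document; each statement's English description precedes it below -/
import Mathlib

section
/- Let (Ω, μ) be a probability space, let 𝒮, 𝒳, ℱ be finite types (with discrete σ-algebras), let S : Ω → 𝒮 and X : Ω → 𝒳 be measurable, and let g : 𝒳 → ℱ. If the mutual information I(S;X) is finite and I(S;X) = I(S; g∘X), then S and X are conditionally independent given the σ-algebra generated by g∘X. (Equality in the data processing inequality implies that g(X) is a sufficient statistic for S with respect to X.) -/
open MeasureTheory ProbabilityTheory
open scoped ENNReal Classical

/-- Kullback–Leibler divergence of `μ` from `ν`, valued in the extended nonnegative reals. -/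
noncomputable def klDiv {α : Type*} [MeasurableSpace α] (μ ν : Measure α) : ℝ≥0∞ :=
  if μ ≪ ν ∧ Integrable (MeasureTheory.llr μ ν) μ then
    ENNReal.ofReal (∫ x, MeasureTheory.llr μ ν x ∂μ) else ⊤

/-- Mutual information `I(U;V)`: KL divergence of the joint law from the product of the
marginal laws. -/
noncomputable def mutualInfo {Ω α β : Type*} [MeasurableSpace Ω] [MeasurableSpace α]
    [MeasurableSpace β] (μ : Measure Ω) (U : Ω → α) (V : Ω → β) : ℝ≥0∞ :=
  klDiv (μ.map fun ω => (U ω, V ω)) ((μ.map U).prod (μ.map V))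

/-- `S` and `X` are conditionally independent given the σ-algebra `m`: for all measurable
sets `A`, `B`, `E[1_{S∈A} · 1_{X∈B} | m] = E[1_{S∈A} | m] · E[1_{X∈B} | m]` a.s. -/
def CondIndepGiven {Ω 𝒮 𝒳 : Type*} [MeasurableSpace Ω] [MeasurableSpace 𝒮]
    [MeasurableSpace 𝒳] (μ : Measure Ω) (m : MeasurableSpace Ω)
    (S : Ω → 𝒮) (X : Ω → 𝒳) : Prop :=
  ∀ (A : Set 𝒮) (B : Set 𝒳), MeasurableSet A → MeasurableSet B →
    μ[fun ω => A.indicator (fun _ => (1 : ℝ)) (S ω) * B.indicator (fun _ => (1 : ℝ)) (X ω) | m]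
      =ᵐ[μ] fun ω =>
        (μ[fun ω' => A.indicator (fun _ => (1 : ℝ)) (S ω') | m]) ω *
        (μ[fun ω' => B.indicator (fun _ => (1 : ℝ)) (X ω') | m]) ω

private lemma gibbs_term_le {p q : ℝ} (hp : 0 ≤ p) (hq : 0 ≤ q) (hpq : 0 < p → 0 < q) :
    p - q ≤ p * Real.log (p / q) := by
  rcases eq_or_lt_of_le hp with h | h
  · simp only [← h, zero_mul, zero_sub]; linarith
  · have hq' := hpq h
    have h1 : Real.log (q / p) ≤ q / p - 1 := Real.log_le_sub_one_of_pos (div_pos hq' h)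
    have h2 : Real.log (p / q) = -Real.log (q / p) := by
      rw [← Real.log_inv]; congr 1; field_simp
    have h3 : p * (q / p) = q := by field_simp
    rw [h2]; nlinarith

private lemma gibbs_term_eq {p q : ℝ} (hp : 0 < p) (hq : 0 < q)
    (heq : p * Real.log (p / q) = p - q) : p = q := by
  by_contra hne
  have h1 : q / p ≠ 1 := by
    intro h
    exact hne ((div_eq_one_iff_eq (ne_of_gt hp)).mp h).symm
  have h2 : Real.log (q / p) < q / p - 1 := Real.log_lt_sub_one_of_pos (div_pos hq hp) h1
  have h3 : Real.log (p / q) = -Real.log (q / p) := by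
    rw [← Real.log_inv]; congr 1; field_simp
  have h4 : p * (q / p) = q := by field_simp
  nlinarith [heq, h3]

private lemma fiber_sum {Ω γ : Type*} [MeasurableSpace Ω] (μ : Measure Ω) [IsFiniteMeasure μ]
    [Fintype γ] [MeasurableSpace γ] [MeasurableSingletonClass γ]
    {φ : Ω → γ} (hφ : Measurable φ) {T : Set Ω} (hT : MeasurableSet T) (W : Set γ) :
    (μ (T ∩ φ ⁻¹' W)).toReal = ∑ y : γ, if y ∈ W then (μ (T ∩ φ ⁻¹' {y})).toReal else 0 := by
  classical
  have hU : T ∩ φ ⁻¹' W = ⋃ y ∈ Finset.univ.filter (· ∈ W), T ∩ φ ⁻¹' {y} := by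
    ext ω
    simp only [Set.mem_inter_iff, Set.mem_preimage, Set.mem_iUnion, Finset.mem_filter,
      Finset.mem_univ, true_and, Set.mem_singleton_iff, exists_prop]
    constructor
    · rintro ⟨h1, h2⟩; exact ⟨φ ω, h2, h1, rfl⟩
    · rintro ⟨y, hy, h1, rfl⟩; exact ⟨h1, hy⟩
  rw [hU, measure_biUnion_finset ?_ fun y _ => hT.inter (hφ (measurableSet_singleton y)),
    ENNReal.toReal_sum fun _ _ => measure_ne_top _ _, Finset.sum_filter]
  intro y1 _ y2 _ hne
  refine Set.disjoint_left.mpr ?_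
  rintro ω ⟨-, hω1⟩ ⟨-, hω2⟩
  simp only [Set.mem_preimage, Set.mem_singleton_iff] at hω1 hω2
  exact hne (by rw [← hω1, ← hω2])

private lemma mutualInfo_eq_sum {Ω α β : Type*} [MeasurableSpace Ω] [Fintype α]
    [MeasurableSpace α] [DiscreteMeasurableSpace α] [Fintype β] [MeasurableSpace β]
    [DiscreteMeasurableSpace β]
    (μ : Measure Ω) [IsProbabilityMeasure μ] {U : Ω → α} {V : Ω → β}
    (hU : Measurable U) (hV : Measurable V) (h : mutualInfo μ U V ≠ ⊤) :
    mutualInfo μ U V = ENNReal.ofReal (∑ p : α × β,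
      (μ (U ⁻¹' {p.1} ∩ V ⁻¹' {p.2})).toReal *
        Real.log ((μ (U ⁻¹' {p.1} ∩ V ⁻¹' {p.2})).toReal /
          ((μ (U ⁻¹' {p.1})).toReal * (μ (V ⁻¹' {p.2})).toReal))) := by
  classical
  have hUV : Measurable fun ω => (U ω, V ω) := hU.prodMk hV
  haveI : IsProbabilityMeasure (μ.map U) := Measure.isProbabilityMeasure_map hU.aemeasurable
  haveI : IsProbabilityMeasure (μ.map V) := Measure.isProbabilityMeasure_map hV.aemeasurable
  haveI : IsProbabilityMeasure (μ.map fun ω => (U ω, V ω)) :=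
    Measure.isProbabilityMeasure_map hUV.aemeasurable
  set μ1 := μ.map (fun ω => (U ω, V ω)) with hμ1d
  set ν1 := (μ.map U).prod (μ.map V) with hν1d
  have hμ1s : ∀ p : α × β, μ1 {p} = μ (U ⁻¹' {p.1} ∩ V ⁻¹' {p.2}) := by
    intro p
    rw [hμ1d, Measure.map_apply hUV (measurableSet_singleton p)]
    congr 1
    ext ω
    simp [Prod.ext_iff]
  have hν1s : ∀ p : α × β, ν1 {p} = μ (U ⁻¹' {p.1}) * μ (V ⁻¹' {p.2}) := by
    intro p
    rw [hν1d, show ({p} : Set (α × β)) = {p.1} ×ˢ {p.2} by simp, Measure.prod_prod,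
      Measure.map_apply hU (measurableSet_singleton _),
      Measure.map_apply hV (measurableSet_singleton _)]
  rw [mutualInfo, klDiv] at h ⊢
  split_ifs at h ⊢ with hc
  swap
  · exact absurd rfl h
  obtain ⟨hac, hint⟩ := hc
  set f : α × β → ℝ≥0∞ := fun p => μ1 {p} / ν1 {p} with hfd
  have hfm : Measurable f := measurable_of_countable f
  have hwd : μ1 = ν1.withDensity f := by
    refine Measure.ext_iff_singleton.mpr fun p => ?_
    rw [withDensity_apply _ (measurableSet_singleton p), lintegral_singleton]
    by_cases h0 : ν1 {p} = 0
    · rw [h0, mul_zero, hac h0]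
    · rw [hfd]
      exact (ENNReal.div_mul_cancel h0 (measure_ne_top _ _)).symm
  have hrn : f =ᵐ[ν1] μ1.rnDeriv ν1 :=
    Measure.eq_rnDeriv (s := 0) hfm (Measure.MutuallySingular.zero_left)
      (by rw [zero_add]; exact hwd)
  have hrnμ : f =ᵐ[μ1] μ1.rnDeriv ν1 := hac.ae_eq hrn
  have hllr : llr μ1 ν1 =ᵐ[μ1] fun p => Real.log ((f p).toReal) := by
    filter_upwards [hrnμ] with p hp
    rw [llr, ← hp]
  rw [integral_congr_ae hllr, integral_fintype Integrable.of_finite]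
  congr 1
  refine Finset.sum_congr rfl fun p _ => ?_
  rw [smul_eq_mul, measureReal_def, hμ1s p]
  by_cases hz : μ (U ⁻¹' {p.1} ∩ V ⁻¹' {p.2}) = 0
  · simp [hz]
  · congr 2
    rw [hfd]
    simp only
    rw [ENNReal.toReal_div, hμ1s p, hν1s p, ENNReal.toReal_mul]

private lemma condexp_comap_fin {Ω ℱ : Type*} [mΩ : MeasurableSpace Ω] (μ : Measure Ω)
    [IsProbabilityMeasure μ] [Fintype ℱ] [mℱ : MeasurableSpace ℱ] [DiscreteMeasurableSpace ℱ]
    {φ : Ω → ℱ} (hφ : Measurable φ) {Y : Ω → ℝ} (hY : Integrable Y μ) :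
    μ[Y | MeasurableSpace.comap φ mℱ]
      =ᵐ[μ] fun ω => (∫ ω' in φ ⁻¹' {φ ω}, Y ω' ∂μ) / (μ (φ ⁻¹' {φ ω})).toReal := by
  classical
  have hm : MeasurableSpace.comap φ mℱ ≤ mΩ := hφ.comap_le
  set avg : ℱ → ℝ := fun f => (∫ ω' in φ ⁻¹' {f}, Y ω' ∂μ) / (μ (φ ⁻¹' {f})).toReal with havg
  have hφm : Measurable[MeasurableSpace.comap φ mℱ] φ := fun s hs => ⟨s, hs, rfl⟩
  have hmeas : Measurable[MeasurableSpace.comap φ mℱ] fun ω => avg (φ ω) :=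
    @Measurable.comp Ω ℱ ℝ (MeasurableSpace.comap φ mℱ) mℱ _ avg φ
      (measurable_of_countable avg) hφm
  have hmeas0 : Measurable fun ω => avg (φ ω) := (measurable_of_countable avg).comp hφ
  have hint : Integrable (fun ω => avg (φ ω)) μ := by
    refine Integrable.mono' (integrable_const (∑ f : ℱ, |avg f|)) hmeas0.aestronglyMeasurable
      (Filter.Eventually.of_forall fun ω => ?_)
    calc ‖avg (φ ω)‖ = |avg (φ ω)| := rfl
      _ ≤ ∑ f : ℱ, |avg f| :=
        Finset.single_le_sum (f := fun f => |avg f|) (fun f _ => abs_nonneg _)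
          (Finset.mem_univ (φ ω))
  have hatom : ∀ f : ℱ, ∫ ω in φ ⁻¹' {f}, avg (φ ω) ∂μ = ∫ ω in φ ⁻¹' {f}, Y ω ∂μ := by
    intro f
    by_cases h0 : μ (φ ⁻¹' {f}) = 0
    · rw [setIntegral_measure_zero _ h0, setIntegral_measure_zero _ h0]
    · have h1 : ∫ ω in φ ⁻¹' {f}, avg (φ ω) ∂μ = ∫ _ω in φ ⁻¹' {f}, avg f ∂μ := by
        refine setIntegral_congr_fun (hφ (measurableSet_singleton f)) fun ω hω => ?_
        simp only [Set.mem_preimage, Set.mem_singleton_iff] at hω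
        rw [hω]
      rw [h1, setIntegral_const, smul_eq_mul, havg]
      exact mul_div_cancel₀ _ (ENNReal.toReal_ne_zero.mpr ⟨h0, measure_ne_top μ _⟩)
  refine (ae_eq_condExp_of_forall_setIntegral_eq hm hY
    (fun s _ _ => hint.integrableOn) (fun s hs _ => ?_)
    (StronglyMeasurable.aestronglyMeasurable hmeas.stronglyMeasurable)).symm
  obtain ⟨D, -, rfl⟩ := hs
  have hde : ∀ (F : Ω → ℝ), Integrable F μ →
      ∫ ω in φ ⁻¹' D, F ω ∂μ
        = ∑ f ∈ Finset.univ.filter (· ∈ D), ∫ ω in φ ⁻¹' {f}, F ω ∂μ := by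
    intro F hF
    have hU : φ ⁻¹' D = ⋃ f ∈ Finset.univ.filter (· ∈ D), φ ⁻¹' {f} := by
      ext ω
      simp only [Set.mem_preimage, Set.mem_iUnion, Finset.mem_filter, Finset.mem_univ, true_and,
        Set.mem_singleton_iff, exists_prop]
      constructor
      · intro hω; exact ⟨φ ω, hω, rfl⟩
      · rintro ⟨y, hy, rfl⟩; exact hy
    rw [hU, integral_biUnion_finset _ (fun f _ => hφ (measurableSet_singleton f)) ?_
      (fun f _ => hF.integrableOn)]
    intro f1 _ f2 _ hne
    refine Set.disjoint_left.mpr ?_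
    intro ω hω1 hω2
    simp only [Set.mem_preimage, Set.mem_singleton_iff] at hω1 hω2
    exact hne (by rw [← hω1, ← hω2])
  rw [hde _ hint, hde _ hY]
  exact Finset.sum_congr rfl fun f _ => hatom f

/-- Equality in the data processing inequality implies that `g ∘ X` is a sufficient statistic
for `S` with respect to `X`: if `I(S;X)` is finite and `I(S;X) = I(S; g∘X)`, then `S` and `X`
are conditionally independent given the σ-algebra generated by `g ∘ X`. -/
theorem condIndep_of_mutualInfo_eq {Ω 𝒮 𝒳 ℱ : Type*} [MeasurableSpace Ω]
    [Fintype 𝒮] [MeasurableSpace 𝒮] [DiscreteMeasurableSpace 𝒮]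
    [Fintype 𝒳] [MeasurableSpace 𝒳] [DiscreteMeasurableSpace 𝒳]
    [Fintype ℱ] [MeasurableSpace ℱ] [DiscreteMeasurableSpace ℱ]
    (μ : Measure Ω) [IsProbabilityMeasure μ]
    (S : Ω → 𝒮) (X : Ω → 𝒳) (hS : Measurable S) (hX : Measurable X) (g : 𝒳 → ℱ)
    (hfin : mutualInfo μ S X ≠ ⊤)
    (heq : mutualInfo μ S X = mutualInfo μ S (g ∘ X)) :
    CondIndepGiven μ (MeasurableSpace.comap (g ∘ X) inferInstance) S X := by
  classical
  have hg : Measurable g := .of_discrete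
  have hgX : Measurable (g ∘ X) := hg.comp hX
  have hpair : Measurable fun ω => (S ω, X ω) := hS.prodMk hX
  have hpair2 : Measurable fun ω => (S ω, (g ∘ X) ω) := hS.prodMk hgX
  have hfin2 : mutualInfo μ S (g ∘ X) ≠ ⊤ := heq ▸ hfin
  obtain ⟨psx, hpsx⟩ : ∃ F : 𝒮 → 𝒳 → ℝ, ∀ s x,
      F s x = (μ (S ⁻¹' {s} ∩ X ⁻¹' {x})).toReal := ⟨_, fun _ _ => rfl⟩
  obtain ⟨ps, hps⟩ : ∃ F : 𝒮 → ℝ, ∀ s, F s = (μ (S ⁻¹' {s})).toReal := ⟨_, fun _ => rfl⟩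
  obtain ⟨px, hpx⟩ : ∃ F : 𝒳 → ℝ, ∀ x, F x = (μ (X ⁻¹' {x})).toReal := ⟨_, fun _ => rfl⟩
  obtain ⟨pg, hpg⟩ : ∃ F : ℱ → ℝ, ∀ f, F f = (μ ((g ∘ X) ⁻¹' {f})).toReal := ⟨_, fun _ => rfl⟩
  obtain ⟨psf, hpsf⟩ : ∃ F : 𝒮 → ℱ → ℝ, ∀ s f,
      F s f = (μ (S ⁻¹' {s} ∩ (g ∘ X) ⁻¹' {f})).toReal := ⟨_, fun _ _ => rfl⟩
  have hpsx0 : ∀ s x, 0 ≤ psx s x := fun s x => by rw [hpsx]; exact ENNReal.toReal_nonneg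
  have hps0 : ∀ s, 0 ≤ ps s := fun s => by rw [hps]; exact ENNReal.toReal_nonneg
  have hpx0 : ∀ x, 0 ≤ px x := fun x => by rw [hpx]; exact ENNReal.toReal_nonneg
  have hpg0 : ∀ f, 0 ≤ pg f := fun f => by rw [hpg]; exact ENNReal.toReal_nonneg
  have hpsf0 : ∀ s f, 0 ≤ psf s f := fun s f => by rw [hpsf]; exact ENNReal.toReal_nonneg
  have hmono : ∀ {T T' : Set Ω}, T ⊆ T' → (μ T).toReal ≤ (μ T').toReal := fun h =>
    ENNReal.toReal_mono (measure_ne_top _ _) (measure_mono h)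
  have hsub_gx : ∀ x : 𝒳, X ⁻¹' {x} ⊆ (g ∘ X) ⁻¹' {g x} := by
    intro x ω hω
    simp only [Set.mem_preimage, Set.mem_singleton_iff] at hω ⊢
    rw [Function.comp_apply, hω]
  have hle_ps : ∀ s x, psx s x ≤ ps s := fun s x => by
    rw [hpsx, hps]; exact hmono Set.inter_subset_left
  have hle_px : ∀ s x, psx s x ≤ px x := fun s x => by
    rw [hpsx, hpx]; exact hmono Set.inter_subset_right
  have hle_psf : ∀ s x, psx s x ≤ psf s (g x) := fun s x => by
    rw [hpsx, hpsf]; exact hmono (Set.inter_subset_inter_right _ (hsub_gx x))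
  have hle_pg : ∀ x, px x ≤ pg (g x) := fun x => by
    rw [hpx, hpg]; exact hmono (hsub_gx x)
  -- sum identities
  have hps_sum : ∑ s, ps s = 1 := by
    have h := fiber_sum μ hS MeasurableSet.univ (Set.univ (α := 𝒮))
    simp only [Set.univ_inter, Set.preimage_univ, Set.mem_univ, if_true, measure_univ,
      ENNReal.toReal_one] at h
    simp only [hps]
    exact h.symm
  have hpx_sum : ∑ x, px x = 1 := by
    have h := fiber_sum μ hX MeasurableSet.univ (Set.univ (α := 𝒳))
    simp only [Set.univ_inter, Set.preimage_univ, Set.mem_univ, if_true, measure_univ,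
      ENNReal.toReal_one] at h
    simp only [hpx]
    exact h.symm
  have hpg_sum : ∑ f, pg f = 1 := by
    have h := fiber_sum μ hgX MeasurableSet.univ (Set.univ (α := ℱ))
    simp only [Set.univ_inter, Set.preimage_univ, Set.mem_univ, if_true, measure_univ,
      ENNReal.toReal_one] at h
    simp only [hpg]
    exact h.symm
  have hpre : ∀ p : 𝒮 × 𝒳, (fun ω => (S ω, X ω)) ⁻¹' {p} = S ⁻¹' {p.1} ∩ X ⁻¹' {p.2} := by
    intro p; ext ω; simp [Prod.ext_iff]
  have hpre2 : ∀ q : 𝒮 × ℱ,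
      (fun ω => (S ω, (g ∘ X) ω)) ⁻¹' {q} = S ⁻¹' {q.1} ∩ (g ∘ X) ⁻¹' {q.2} := by
    intro q; ext ω; simp [Prod.ext_iff]
  have hpsx_sum : ∑ p : 𝒮 × 𝒳, psx p.1 p.2 = 1 := by
    have h := fiber_sum μ hpair MeasurableSet.univ (Set.univ (α := 𝒮 × 𝒳))
    simp only [Set.univ_inter, Set.preimage_univ, Set.mem_univ, if_true, measure_univ,
      ENNReal.toReal_one, hpre] at h
    simp only [hpsx]
    exact h.symm
  have hpsf_sum : ∑ q : 𝒮 × ℱ, psf q.1 q.2 = 1 := by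
    have h := fiber_sum μ hpair2 MeasurableSet.univ (Set.univ (α := 𝒮 × ℱ))
    simp only [Set.univ_inter, Set.preimage_univ, Set.mem_univ, if_true, measure_univ,
      ENNReal.toReal_one, hpre2] at h
    simp only [hpsf]
    exact h.symm
  have hpsf_eq : ∀ s f, psf s f = ∑ x, if g x = f then psx s x else 0 := by
    intro s f
    have h := fiber_sum μ hX (hS (measurableSet_singleton s)) (g ⁻¹' {f})
    rw [hpsf, show ((g ∘ X) ⁻¹' {f} : Set Ω) = X ⁻¹' (g ⁻¹' {f}) from rfl, h]
    refine Finset.sum_congr rfl fun x _ => ?_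
    simp only [Set.mem_preimage, Set.mem_singleton_iff, hpsx]
  have hpg_eq : ∀ f, ∑ s, psf s f = pg f := by
    intro f
    have h := fiber_sum μ hS (hgX (measurableSet_singleton f)) (Set.univ (α := 𝒮))
    simp only [Set.preimage_univ, Set.inter_univ, Set.mem_univ, if_true] at h
    rw [hpg, h]
    refine Finset.sum_congr rfl fun s _ => ?_
    rw [hpsf, Set.inter_comm]
  -- the two mutual informations as sums
  have h1 : mutualInfo μ S X = ENNReal.ofReal (∑ p : 𝒮 × 𝒳,
      psx p.1 p.2 * Real.log (psx p.1 p.2 / (ps p.1 * px p.2))) := by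
    simp only [hpsx, hps, hpx]
    exact mutualInfo_eq_sum μ hS hX hfin
  have h2 : mutualInfo μ S (g ∘ X) = ENNReal.ofReal (∑ q : 𝒮 × ℱ,
      psf q.1 q.2 * Real.log (psf q.1 q.2 / (ps q.1 * pg q.2))) := by
    simp only [hpsf, hps, hpg]
    exact mutualInfo_eq_sum μ hS hgX hfin2
  have hofr : ENNReal.ofReal (∑ p : 𝒮 × 𝒳,
        psx p.1 p.2 * Real.log (psx p.1 p.2 / (ps p.1 * px p.2)))
      = ENNReal.ofReal (∑ q : 𝒮 × ℱ,
        psf q.1 q.2 * Real.log (psf q.1 q.2 / (ps q.1 * pg q.2))) := by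
    rw [← h1, ← h2, heq]
  -- nonnegativity of both sums
  have hprod_sum1 : ∑ p : 𝒮 × 𝒳, ps p.1 * px p.2 = 1 := by
    rw [Fintype.sum_prod_type, ← Finset.sum_mul_sum, hps_sum, hpx_sum, mul_one]
  have hprod_sum2 : ∑ q : 𝒮 × ℱ, ps q.1 * pg q.2 = 1 := by
    rw [Fintype.sum_prod_type, ← Finset.sum_mul_sum, hps_sum, hpg_sum, mul_one]
  have hI1_nonneg : 0 ≤ ∑ p : 𝒮 × 𝒳,
      psx p.1 p.2 * Real.log (psx p.1 p.2 / (ps p.1 * px p.2)) := by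
    have hle := Finset.sum_le_sum (s := Finset.univ) (f := fun p : 𝒮 × 𝒳 =>
      psx p.1 p.2 - ps p.1 * px p.2)
      (g := fun p : 𝒮 × 𝒳 => psx p.1 p.2 * Real.log (psx p.1 p.2 / (ps p.1 * px p.2)))
      (fun p _ => gibbs_term_le (hpsx0 _ _) (mul_nonneg (hps0 _) (hpx0 _))
        (fun h => mul_pos (lt_of_lt_of_le h (hle_ps _ _)) (lt_of_lt_of_le h (hle_px _ _))))
    rw [Finset.sum_sub_distrib, hpsx_sum, hprod_sum1, sub_self] at hle
    exact hle
  have hI2_nonneg : 0 ≤ ∑ q : 𝒮 × ℱ,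
      psf q.1 q.2 * Real.log (psf q.1 q.2 / (ps q.1 * pg q.2)) := by
    have hle := Finset.sum_le_sum (s := Finset.univ) (f := fun q : 𝒮 × ℱ =>
      psf q.1 q.2 - ps q.1 * pg q.2)
      (g := fun q : 𝒮 × ℱ => psf q.1 q.2 * Real.log (psf q.1 q.2 / (ps q.1 * pg q.2)))
      (fun q _ => gibbs_term_le (hpsf0 _ _) (mul_nonneg (hps0 _) (hpg0 _))
        (fun h => by
          have h1 : 0 < pg q.2 := by
            refine lt_of_lt_of_le h (?_)
            rw [hpsf, hpg]
            exact hmono Set.inter_subset_right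
          have h2 : 0 < ps q.1 := by
            refine lt_of_lt_of_le h (?_)
            rw [hpsf, hps]
            exact hmono Set.inter_subset_left
          exact mul_pos h2 h1))
    rw [Finset.sum_sub_distrib, hpsf_sum, hprod_sum2, sub_self] at hle
    exact hle
  have hI12 : (∑ p : 𝒮 × 𝒳, psx p.1 p.2 * Real.log (psx p.1 p.2 / (ps p.1 * px p.2)))
      = ∑ q : 𝒮 × ℱ, psf q.1 q.2 * Real.log (psf q.1 q.2 / (ps q.1 * pg q.2)) :=
    (ENNReal.ofReal_eq_ofReal_iff hI1_nonneg hI2_nonneg).mp hofr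
  -- reshape I₂ as a sum over 𝒮 × 𝒳
  have hI2' : (∑ q : 𝒮 × ℱ, psf q.1 q.2 * Real.log (psf q.1 q.2 / (ps q.1 * pg q.2)))
      = ∑ p : 𝒮 × 𝒳, psx p.1 p.2
          * Real.log (psf p.1 (g p.2) / (ps p.1 * pg (g p.2))) := by
    simp only [Fintype.sum_prod_type]
    refine Finset.sum_congr rfl fun s _ => ?_
    calc ∑ f : ℱ, psf s f * Real.log (psf s f / (ps s * pg f))
        = ∑ f : ℱ, ∑ x : 𝒳,
            (if g x = f then psx s x * Real.log (psf s f / (ps s * pg f)) else 0) := by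
          refine Finset.sum_congr rfl fun f _ => ?_
          rw [hpsf_eq, Finset.sum_mul]
          refine Finset.sum_congr rfl fun x _ => ?_
          rw [ite_mul, zero_mul]
      _ = ∑ x : 𝒳, ∑ f : ℱ,
            (if g x = f then psx s x * Real.log (psf s f / (ps s * pg f)) else 0) :=
          Finset.sum_comm
      _ = ∑ x : 𝒳, psx s x * Real.log (psf s (g x) / (ps s * pg (g x))) := by
          refine Finset.sum_congr rfl fun x _ => ?_
          rw [Finset.sum_ite_eq]
          exact if_pos (Finset.mem_univ _)
  -- the quotient function
  obtain ⟨Q, hQdef⟩ : ∃ F : 𝒮 × 𝒳 → ℝ, ∀ p,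
      F p = psf p.1 (g p.2) * px p.2 / pg (g p.2) := ⟨_, fun _ => rfl⟩
  have hQ0 : ∀ p, 0 ≤ Q p := fun p => by
    rw [hQdef]
    exact div_nonneg (mul_nonneg (hpsf0 _ _) (hpx0 _)) (hpg0 _)
  have hQpos : ∀ p : 𝒮 × 𝒳, 0 < psx p.1 p.2 → 0 < Q p := by
    intro p h
    rw [hQdef]
    exact div_pos (mul_pos (lt_of_lt_of_le h (hle_psf _ _)) (lt_of_lt_of_le h (hle_px _ _)))
      (lt_of_lt_of_le (lt_of_lt_of_le h (hle_px _ _)) (hle_pg _))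
  have hdiff : ∀ p : 𝒮 × 𝒳,
      psx p.1 p.2 * Real.log (psx p.1 p.2 / (ps p.1 * px p.2))
        - psx p.1 p.2 * Real.log (psf p.1 (g p.2) / (ps p.1 * pg (g p.2)))
        = psx p.1 p.2 * Real.log (psx p.1 p.2 / Q p) := by
    intro p
    by_cases hz : psx p.1 p.2 = 0
    · simp [hz]
    · have h0 : 0 < psx p.1 p.2 := lt_of_le_of_ne (hpsx0 _ _) (Ne.symm hz)
      have hps' : 0 < ps p.1 := lt_of_lt_of_le h0 (hle_ps _ _)
      have hpx' : 0 < px p.2 := lt_of_lt_of_le h0 (hle_px _ _)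
      have hpsf' : 0 < psf p.1 (g p.2) := lt_of_lt_of_le h0 (hle_psf _ _)
      have hpg' : 0 < pg (g p.2) := lt_of_lt_of_le hpx' (hle_pg _)
      rw [hQdef, div_div_eq_mul_div, ← mul_sub]
      congr 1
      rw [Real.log_div h0.ne' (mul_pos hps' hpx').ne',
        Real.log_div hpsf'.ne' (mul_pos hps' hpg').ne',
        Real.log_mul hps'.ne' hpx'.ne', Real.log_mul hps'.ne' hpg'.ne',
        Real.log_div (mul_pos h0 hpg').ne' (mul_pos hpsf' hpx').ne',
        Real.log_mul h0.ne' hpg'.ne', Real.log_mul hpsf'.ne' hpx'.ne']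
      ring
  have hQsum : ∑ p : 𝒮 × 𝒳, Q p = 1 := by
    have hxx : ∀ x : 𝒳, ∑ s : 𝒮, Q (s, x) = px x := by
      intro x
      by_cases hpgz : pg (g x) = 0
      · have hpxz : px x = 0 := le_antisymm (hpgz ▸ hle_pg x) (hpx0 x)
        simp only [hQdef, hpgz, div_zero, Finset.sum_const_zero]
        exact hpxz.symm
      · simp only [hQdef]
        rw [← Finset.sum_div, ← Finset.sum_mul, hpg_eq, mul_comm, mul_div_assoc,
          div_self hpgz, mul_one]
    calc ∑ p : 𝒮 × 𝒳, Q p = ∑ x, ∑ s, Q (s, x) := by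
          simp only [Fintype.sum_prod_type_right]
      _ = ∑ x, px x := Finset.sum_congr rfl fun x _ => hxx x
      _ = 1 := hpx_sum
  have htot : ∑ p : 𝒮 × 𝒳, (psx p.1 p.2 - Q p)
      = ∑ p : 𝒮 × 𝒳, psx p.1 p.2 * Real.log (psx p.1 p.2 / Q p) := by
    have hl : ∑ p : 𝒮 × 𝒳, (psx p.1 p.2 - Q p) = 0 := by
      rw [Finset.sum_sub_distrib, hpsx_sum, hQsum, sub_self]
    have hr : ∑ p : 𝒮 × 𝒳, psx p.1 p.2 * Real.log (psx p.1 p.2 / Q p) = 0 := by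
      rw [← Finset.sum_congr rfl fun p _ => hdiff p, Finset.sum_sub_distrib, hI12, hI2',
        sub_self]
    rw [hl, hr]
  have heqterm : ∀ p : 𝒮 × 𝒳,
      psx p.1 p.2 - Q p = psx p.1 p.2 * Real.log (psx p.1 p.2 / Q p) := by
    intro p
    exact (Finset.sum_eq_sum_iff_of_le
      (fun p _ => gibbs_term_le (hpsx0 _ _) (hQ0 p) (hQpos p))).mp htot p (Finset.mem_univ p)
  have hPQ : ∀ p : 𝒮 × 𝒳, psx p.1 p.2 = Q p := by
    intro p
    by_cases hz : psx p.1 p.2 = 0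
    · have h := heqterm p
      rw [hz, zero_mul, zero_sub, neg_eq_zero] at h
      rw [hz, h]
    · have h0 : 0 < psx p.1 p.2 := lt_of_le_of_ne (hpsx0 _ _) (Ne.symm hz)
      exact gibbs_term_eq h0 (hQpos p h0) (heqterm p).symm
  have star : ∀ s x, psx s x * pg (g x) = psf s (g x) * px x := by
    intro s x
    have h := hPQ (s, x)
    rw [hQdef] at h
    simp only at h
    by_cases hpgz : pg (g x) = 0
    · have hpxz : px x = 0 := le_antisymm (hpgz ▸ hle_pg x) (hpx0 x)
      rw [hpgz, hpxz, mul_zero, mul_zero]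
    · rw [h, div_mul_cancel₀ _ hpgz]
  -- Part B: factorization of measures over each atom
  have partB : ∀ (A : Set 𝒮) (B : Set 𝒳) (f : ℱ),
      (μ (S ⁻¹' A ∩ X ⁻¹' B ∩ (g ∘ X) ⁻¹' {f})).toReal * pg f
        = (μ (S ⁻¹' A ∩ (g ∘ X) ⁻¹' {f})).toReal
            * (μ (X ⁻¹' B ∩ (g ∘ X) ⁻¹' {f})).toReal := by
    intro A B f
    have hAm : MeasurableSet A := .of_discrete
    have hBm : MeasurableSet B := .of_discrete
    have hm3 : (μ (X ⁻¹' B ∩ (g ∘ X) ⁻¹' {f})).toReal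
        = ∑ x : 𝒳, if x ∈ B ∧ g x = f then px x else 0 := by
      have h := fiber_sum μ hX MeasurableSet.univ (B ∩ g ⁻¹' {f})
      simp only [Set.univ_inter] at h
      rw [show X ⁻¹' B ∩ (g ∘ X) ⁻¹' {f} = X ⁻¹' (B ∩ g ⁻¹' {f}) by
        rw [Set.preimage_inter]; rfl, h]
      refine Finset.sum_congr rfl fun x _ => ?_
      simp only [Set.mem_inter_iff, Set.mem_preimage, Set.mem_singleton_iff, hpx]
    have hm2 : (μ (S ⁻¹' A ∩ (g ∘ X) ⁻¹' {f})).toReal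
        = ∑ s : 𝒮, if s ∈ A then psf s f else 0 := by
      have h := fiber_sum μ hS (hgX (measurableSet_singleton f)) A
      rw [Set.inter_comm, h]
      refine Finset.sum_congr rfl fun s _ => ?_
      rw [hpsf, Set.inter_comm]
    have hm1 : (μ (S ⁻¹' A ∩ X ⁻¹' B ∩ (g ∘ X) ⁻¹' {f})).toReal
        = ∑ x : 𝒳, if x ∈ B ∧ g x = f
            then (∑ s : 𝒮, if s ∈ A then psx s x else 0) else 0 := by
      have h := fiber_sum μ hX (hS hAm) (B ∩ g ⁻¹' {f})
      rw [show S ⁻¹' A ∩ X ⁻¹' B ∩ (g ∘ X) ⁻¹' {f} = S ⁻¹' A ∩ X ⁻¹' (B ∩ g ⁻¹' {f}) by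
        rw [Set.preimage_inter, Set.inter_assoc]; rfl, h]
      refine Finset.sum_congr rfl fun x _ => ?_
      simp only [Set.mem_inter_iff, Set.mem_preimage, Set.mem_singleton_iff]
      split_ifs with hc
      · have h2 := fiber_sum μ hS (hX (measurableSet_singleton x)) A
        rw [Set.inter_comm, h2]
        refine Finset.sum_congr rfl fun s _ => ?_
        rw [hpsx, Set.inter_comm]
      · rfl
    rw [hm1, hm2, hm3, Finset.sum_mul, Finset.mul_sum]
    refine Finset.sum_congr rfl fun x _ => ?_
    rw [ite_mul, zero_mul, mul_ite, mul_zero]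
    split_ifs with hc
    · rw [Finset.sum_mul, Finset.sum_mul]
      refine Finset.sum_congr rfl fun s _ => ?_
      rw [ite_mul, ite_mul, zero_mul, zero_mul]
      split_ifs with hsA
      · rw [← hc.2, star s x]
      · rfl
    · rfl
  -- Part C: conclude conditional independence
  intro A B hA hB
  have e1 : (fun ω => A.indicator (fun _ => (1 : ℝ)) (S ω)
        * B.indicator (fun _ => (1 : ℝ)) (X ω))
      = (S ⁻¹' A ∩ X ⁻¹' B).indicator (fun _ => (1 : ℝ)) := by
    funext ω
    by_cases h1 : S ω ∈ A <;> by_cases h2 : X ω ∈ B <;>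
      simp [Set.indicator_apply, h1, h2]
  have e2 : (fun ω => A.indicator (fun _ => (1 : ℝ)) (S ω))
      = (S ⁻¹' A).indicator (fun _ => (1 : ℝ)) := by
    funext ω; by_cases h1 : S ω ∈ A <;> simp [Set.indicator_apply, h1]
  have e3 : (fun ω => B.indicator (fun _ => (1 : ℝ)) (X ω))
      = (X ⁻¹' B).indicator (fun _ => (1 : ℝ)) := by
    funext ω; by_cases h1 : X ω ∈ B <;> simp [Set.indicator_apply, h1]
  rw [e1, e2, e3]
  have hi1 : Integrable ((S ⁻¹' A ∩ X ⁻¹' B).indicator (fun _ => (1 : ℝ))) μ :=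
    (integrable_const 1).indicator ((hS hA).inter (hX hB))
  have hi2 : Integrable ((S ⁻¹' A).indicator (fun _ => (1 : ℝ))) μ :=
    (integrable_const 1).indicator (hS hA)
  have hi3 : Integrable ((X ⁻¹' B).indicator (fun _ => (1 : ℝ))) μ :=
    (integrable_const 1).indicator (hX hB)
  have c1 := condexp_comap_fin μ hgX hi1
  have c2 := condexp_comap_fin μ hgX hi2
  have c3 := condexp_comap_fin μ hgX hi3
  have hnull : ∀ᵐ ω ∂μ, μ ((g ∘ X) ⁻¹' {(g ∘ X) ω}) ≠ 0 := by
    rw [ae_iff]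
    have hsub : {ω | ¬ μ ((g ∘ X) ⁻¹' {(g ∘ X) ω}) ≠ 0}
        ⊆ ⋃ f ∈ {f : ℱ | μ ((g ∘ X) ⁻¹' {f}) = 0}, (g ∘ X) ⁻¹' {f} := by
      intro ω hω
      simp only [Set.mem_setOf_eq, not_not] at hω
      exact Set.mem_biUnion hω rfl
    refine measure_mono_null hsub ?_
    exact (measure_biUnion_null_iff (Set.to_countable _)).mpr fun f hf => hf
  refine c1.trans (Filter.EventuallyEq.trans ?_ (c2.mul c3).symm)
  filter_upwards [hnull] with ω hω
  have hint_i : ∀ (W : Set Ω), MeasurableSet W →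
      ∫ ω' in (g ∘ X) ⁻¹' {(g ∘ X) ω}, W.indicator (fun _ => (1 : ℝ)) ω' ∂μ
        = (μ (W ∩ (g ∘ X) ⁻¹' {(g ∘ X) ω})).toReal := by
    intro W hW
    rw [setIntegral_indicator hW, setIntegral_const, smul_eq_mul, mul_one, Set.inter_comm, measureReal_def]
  simp only [Pi.mul_apply]
  rw [hint_i _ ((hS hA).inter (hX hB)), hint_i _ (hS hA), hint_i _ (hX hB)]
  have hmm : (μ ((g ∘ X) ⁻¹' {(g ∘ X) ω})).toReal ≠ 0 :=
    ENNReal.toReal_ne_zero.mpr ⟨hω, measure_ne_top _ _⟩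
  have hB' := partB A B ((g ∘ X) ω)
  rw [hpg] at hB'
  rw [div_mul_div_comm, ← hB', mul_div_mul_right _ _ hmm]
end

section
/- Let (Ω, μ) be a probability space, let 𝒮, 𝒳, ℱ be finite types (with discrete σ-algebras), let S : Ω → 𝒮 and X : Ω → 𝒳 be measurable, and let g : 𝒳 → ℱ. If S and X are conditionally independent given the σ-algebra generated by g∘X (i.e., S — g(X) — X form a Markov chain), then I(S;X) = I(S; g∘X). (A sufficient statistic loses no information: the embedding f = g(X) preserves all segmentation-relevant information.) -/
open MeasureTheory ProbabilityTheory
open scoped ENNReal Classical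

lemma ac_of_singletons {α : Type*} [Countable α] [MeasurableSpace α]
    [MeasurableSingletonClass α] {μ ν : Measure α}
    (h : ∀ a, ν {a} = 0 → μ {a} = 0) : μ ≪ ν := by
  intro s hs
  have hs' : s = ⋃ a ∈ s, {a} := by simp
  rw [hs']
  rw [measure_biUnion_null_iff (Set.to_countable s)]
  intro a ha
  exact h a (le_antisymm (le_trans (measure_mono (by simpa using ha)) hs.le) (zero_le))

lemma klDiv_fintype_eq {α : Type*} [Fintype α] [MeasurableSpace α]
    [DiscreteMeasurableSpace α] (μ ν : Measure α) [IsFiniteMeasure μ] [IsFiniteMeasure ν]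
    (hac : μ ≪ ν) :
    klDiv μ ν = ENNReal.ofReal
      (∑ a, (μ {a}).toReal * Real.log ((μ {a}).toReal / (ν {a}).toReal)) := by
  classical
  set f : α → ℝ≥0∞ := fun a => μ {a} / ν {a} with hf
  have hfmeas : Measurable f := .of_discrete
  have hμeq : μ = ν.withDensity f := by
    ext s hs
    have h1 : (ν.withDensity f) s = ∫⁻ a in s, f a ∂ν := withDensity_apply f hs
    have hsum : ∀ (m : Measure α), m s = ∑ a ∈ s.toFinset, m {a} := by
      intro m
      conv_lhs => rw [show s = ⋃ a ∈ s.toFinset, {a} by simp]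
      rw [measure_biUnion_finset ?_ (fun _ _ => measurableSet_singleton _)]
      · intro a _ b _ hab
        simp [Set.disjoint_singleton, hab]
    rw [h1, hsum μ]
    have : ∫⁻ a in s, f a ∂ν = ∑ a ∈ s.toFinset, f a * ν {a} := by
      conv_lhs => rw [show s = ⋃ a ∈ s.toFinset, {a} by simp]
      rw [lintegral_biUnion_finset ?_ (fun _ _ => measurableSet_singleton _)]
      · exact Finset.sum_congr rfl fun a _ => lintegral_singleton f a
      · intro a _ b _ hab
        simp [Function.onFun, Set.disjoint_singleton, hab]
    rw [this]
    refine Finset.sum_congr rfl fun a _ => ?_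
    by_cases hν : ν {a} = 0
    · simp [hac hν, hν]
    · rw [hf]
      exact (ENNReal.div_mul_cancel hν (measure_ne_top _ _)).symm
  have hrn : μ.rnDeriv ν =ᵐ[ν] f := by
    conv_lhs => rw [hμeq]
    exact Measure.rnDeriv_withDensity ν hfmeas
  have hrnμ : μ.rnDeriv ν =ᵐ[μ] f := hac.ae_le hrn
  have hllr : llr μ ν =ᵐ[μ] fun a => Real.log ((f a).toReal) := by
    filter_upwards [hrnμ] with a ha
    rw [llr_def]
    simp only [ha]
  have hint : Integrable (llr μ ν) μ := .of_finite
  rw [klDiv, if_pos ⟨hac, hint⟩]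
  congr 1
  rw [integral_congr_ae hllr, integral_fintype _]
  refine Finset.sum_congr rfl fun a _ => ?_
  rw [hf]
  simp [ENNReal.toReal_div, smul_eq_mul, Measure.real]
  exact .of_finite

lemma constant_on_atoms {Ω ℱ : Type*} [MeasurableSpace ℱ] (Y : Ω → ℱ)
    {u : Ω → ℝ} (hu : Measurable[MeasurableSpace.comap Y inferInstance] u)
    {ω₁ ω₂ : Ω} (hY : Y ω₁ = Y ω₂) : u ω₁ = u ω₂ := by
  have h : MeasurableSet[MeasurableSpace.comap Y inferInstance] (u ⁻¹' {u ω₁}) :=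
    hu (measurableSet_singleton _)
  obtain ⟨T, -, hT⟩ := h
  have h1 : ω₁ ∈ Y ⁻¹' T := by rw [hT]; simp
  have h2 : ω₂ ∈ Y ⁻¹' T := by simpa [Set.mem_preimage, ← hY] using h1
  rw [hT] at h2
  exact (h2 : u ω₂ = u ω₁).symm

lemma condexp_atom_value {Ω ℱ : Type*} {mΩ : MeasurableSpace Ω} [MeasurableSpace ℱ]
    [MeasurableSingletonClass ℱ]
    (μ : Measure Ω) [IsProbabilityMeasure μ] (Y : Ω → ℱ) (hY : Measurable Y)
    (h : Ω → ℝ) (hh : Integrable h μ) (ω₀ : Ω) :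
    (μ[h | MeasurableSpace.comap Y inferInstance]) ω₀ * (μ (Y ⁻¹' {Y ω₀})).toReal
      = ∫ ω in Y ⁻¹' {Y ω₀}, h ω ∂μ := by
  have hm : MeasurableSpace.comap Y inferInstance ≤ mΩ := by
    rintro s ⟨T, hT, rfl⟩
    exact hY hT
  have hatom_m : MeasurableSet[MeasurableSpace.comap Y inferInstance] (Y ⁻¹' {Y ω₀}) :=
    ⟨{Y ω₀}, measurableSet_singleton _, rfl⟩
  have hatom : MeasurableSet[mΩ] (Y ⁻¹' {Y ω₀}) := hY (measurableSet_singleton (Y ω₀))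
  have hu : Measurable[MeasurableSpace.comap Y inferInstance]
      (μ[h | MeasurableSpace.comap Y inferInstance]) := stronglyMeasurable_condExp.measurable
  have h1 : ∫ ω in Y ⁻¹' {Y ω₀}, (μ[h | MeasurableSpace.comap Y inferInstance]) ω ∂μ
      = ∫ ω in Y ⁻¹' {Y ω₀}, h ω ∂μ := setIntegral_condExp hm hh hatom_m
  have h2 : ∫ ω in Y ⁻¹' {Y ω₀}, (μ[h | MeasurableSpace.comap Y inferInstance]) ω ∂μ
      = ∫ ω in Y ⁻¹' {Y ω₀}, (μ[h | MeasurableSpace.comap Y inferInstance]) ω₀ ∂μ := by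
    refine setIntegral_congr_fun hatom fun ω hω => ?_
    exact constant_on_atoms Y hu (hω : Y ω = Y ω₀)
  rw [h2, setIntegral_const, smul_eq_mul, mul_comm] at h1
  exact h1

lemma key_identity {Ω 𝒮 𝒳 ℱ : Type*} {mΩ : MeasurableSpace Ω}
    [MeasurableSpace 𝒮] [MeasurableSingletonClass 𝒮]
    [MeasurableSpace 𝒳] [MeasurableSingletonClass 𝒳]
    [MeasurableSpace ℱ] [MeasurableSingletonClass ℱ]
    (μ : Measure Ω) [IsProbabilityMeasure μ]
    (S : Ω → 𝒮) (X : Ω → 𝒳) (hS : Measurable S) (hX : Measurable X)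
    (g : 𝒳 → ℱ) (hg : Measurable g)
    (hCI : CondIndepGiven μ (MeasurableSpace.comap (g ∘ X) inferInstance) S X)
    (s : 𝒮) (x : 𝒳) :
    (μ (S ⁻¹' {s} ∩ X ⁻¹' {x})).toReal * (μ ((g ∘ X) ⁻¹' {g x})).toReal
      = (μ (S ⁻¹' {s} ∩ (g ∘ X) ⁻¹' {g x})).toReal * (μ (X ⁻¹' {x})).toReal := by
  set Y := g ∘ X with hYdef
  set atom := Y ⁻¹' {g x} with hatomdef
  have hsub : X ⁻¹' {x} ⊆ atom := by
    intro ω hω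
    simp only [Set.mem_preimage, Set.mem_singleton_iff] at hω ⊢
    show g (X ω) = g x
    rw [hω]
  by_cases hA0 : μ atom = 0
  · have h1 : μ (X ⁻¹' {x}) = 0 := measure_mono_null hsub hA0
    have h2 : μ (S ⁻¹' {s} ∩ atom) = 0 :=
      measure_mono_null Set.inter_subset_right hA0
    simp [hA0, h1, h2]
  · have hSset : MeasurableSet (S ⁻¹' {s}) := hS (measurableSet_singleton s)
    have hXset : MeasurableSet (X ⁻¹' {x}) := hX (measurableSet_singleton x)
    have hSXset : MeasurableSet (S ⁻¹' {s} ∩ X ⁻¹' {x}) := hSset.inter hXset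
    have hindS : (fun ω => ({s} : Set 𝒮).indicator (fun _ => (1:ℝ)) (S ω))
        = (S ⁻¹' {s}).indicator (fun _ => (1:ℝ)) := by
      funext ω; by_cases hω : S ω = s <;> simp [Set.indicator_apply, hω]
    have hindX : (fun ω => ({x} : Set 𝒳).indicator (fun _ => (1:ℝ)) (X ω))
        = (X ⁻¹' {x}).indicator (fun _ => (1:ℝ)) := by
      funext ω; by_cases hω : X ω = x <;> simp [Set.indicator_apply, hω]
    have hindSX : (fun ω => ({s} : Set 𝒮).indicator (fun _ => (1:ℝ)) (S ω)
          * ({x} : Set 𝒳).indicator (fun _ => (1:ℝ)) (X ω))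
        = (S ⁻¹' {s} ∩ X ⁻¹' {x}).indicator (fun _ => (1:ℝ)) := by
      funext ω
      by_cases h1 : S ω = s <;> by_cases h2 : X ω = x <;>
        simp [Set.indicator_apply, h1, h2]
    have hintS : Integrable ((S ⁻¹' {s}).indicator (fun _ => (1:ℝ))) μ :=
      (integrable_const (1:ℝ)).indicator hSset
    have hintX : Integrable ((X ⁻¹' {x}).indicator (fun _ => (1:ℝ))) μ :=
      (integrable_const (1:ℝ)).indicator hXset
    have hintSX : Integrable ((S ⁻¹' {s} ∩ X ⁻¹' {x}).indicator (fun _ => (1:ℝ))) μ :=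
      (integrable_const (1:ℝ)).indicator hSXset
    have hae := hCI {s} {x} (measurableSet_singleton s) (measurableSet_singleton x)
    rw [Filter.EventuallyEq, ae_iff] at hae
    have hnsub : ¬ atom ⊆ {ω | ¬ _} := fun hsub' => hA0 (measure_mono_null hsub' hae)
    obtain ⟨ω₀, hω₀atom, hω₀⟩ := Set.not_subset.mp hnsub
    have heq := not_not.mp hω₀
    have hYω₀ : Y ω₀ = g x := hω₀atom
    have hYmeas : Measurable Y := hg.comp hX
    have e1 := condexp_atom_value μ Y hYmeas _ hintSX ω₀
    have e2 := condexp_atom_value μ Y hYmeas _ hintS ω₀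
    have e3 := condexp_atom_value μ Y hYmeas _ hintX ω₀
    rw [hYω₀] at e1 e2 e3
    rw [← hatomdef] at e1 e2 e3
    have intval : ∀ C : Set Ω, MeasurableSet C →
        ∫ ω in atom, C.indicator (fun _ => (1:ℝ)) ω ∂μ = (μ (atom ∩ C)).toReal := by
      intro C hC
      rw [setIntegral_indicator hC, setIntegral_const, smul_eq_mul, mul_one]
      rfl
    rw [intval _ hSXset] at e1
    rw [intval _ hSset] at e2
    rw [intval _ hXset] at e3
    have hcap1 : atom ∩ (S ⁻¹' {s} ∩ X ⁻¹' {x}) = S ⁻¹' {s} ∩ X ⁻¹' {x} := by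
      rw [Set.inter_eq_right]
      exact fun ω hω => hsub hω.2
    have hcap3 : atom ∩ X ⁻¹' {x} = X ⁻¹' {x} := by
      rw [Set.inter_eq_right]; exact hsub
    rw [hcap1] at e1
    rw [hcap3] at e3
    simp only [hindSX, hindS, hindX, Set.mem_setOf_eq] at heq
    rw [Set.inter_comm] at e2
    rw [← e1, ← e2, ← e3, heq]
    ring

/-- A sufficient statistic loses no information: if `S` and `X` are conditionally independent
given the σ-algebra generated by `g ∘ X` (i.e. `S — g(X) — X` form a Markov chain), then
`I(S;X) = I(S; g∘X)`. -/
theorem mutualInfo_eq_of_condIndep {Ω 𝒮 𝒳 ℱ : Type*} [MeasurableSpace Ω]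
    [Fintype 𝒮] [MeasurableSpace 𝒮] [DiscreteMeasurableSpace 𝒮]
    [Fintype 𝒳] [MeasurableSpace 𝒳] [DiscreteMeasurableSpace 𝒳]
    [Fintype ℱ] [MeasurableSpace ℱ] [DiscreteMeasurableSpace ℱ]
    (μ : Measure Ω) [IsProbabilityMeasure μ]
    (S : Ω → 𝒮) (X : Ω → 𝒳) (hS : Measurable S) (hX : Measurable X) (g : 𝒳 → ℱ)
    (hCI : CondIndepGiven μ (MeasurableSpace.comap (g ∘ X) inferInstance) S X) :
    mutualInfo μ S X = mutualInfo μ S (g ∘ X) := by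
  classical
  set Y : Ω → ℱ := g ∘ X with hYdef
  have hg : Measurable g := .of_discrete
  have hY : Measurable Y := hg.comp hX
  -- singleton values
  have hJ : ∀ s x, (μ.map fun ω => (S ω, X ω)) {(s, x)} = μ (S ⁻¹' {s} ∩ X ⁻¹' {x}) := by
    intro s x
    rw [Measure.map_apply (hS.prodMk hX) (measurableSet_singleton _)]
    congr 1
    ext ω
    simp [Prod.ext_iff]
  have hK : ∀ s f, (μ.map fun ω => (S ω, Y ω)) {(s, f)} = μ (S ⁻¹' {s} ∩ Y ⁻¹' {f}) := by
    intro s f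
    rw [Measure.map_apply (hS.prodMk hY) (measurableSet_singleton _)]
    congr 1
    ext ω
    simp [Prod.ext_iff]
  have hPS : ∀ s, (μ.map S) {s} = μ (S ⁻¹' {s}) := fun s =>
    Measure.map_apply hS (measurableSet_singleton s)
  have hPX : ∀ x, (μ.map X) {x} = μ (X ⁻¹' {x}) := fun x =>
    Measure.map_apply hX (measurableSet_singleton x)
  have hPF : ∀ f, (μ.map Y) {f} = μ (Y ⁻¹' {f}) := fun f =>
    Measure.map_apply hY (measurableSet_singleton f)
  have hprod1 : ∀ (s : 𝒮) (x : 𝒳),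
      ((μ.map S).prod (μ.map X)) {(s, x)} = μ (S ⁻¹' {s}) * μ (X ⁻¹' {x}) := by
    intro s x
    rw [← Set.singleton_prod_singleton, Measure.prod_prod, hPS, hPX]
  have hprod2 : ∀ (s : 𝒮) (f : ℱ),
      ((μ.map S).prod (μ.map Y)) {(s, f)} = μ (S ⁻¹' {s}) * μ (Y ⁻¹' {f}) := by
    intro s f
    rw [← Set.singleton_prod_singleton, Measure.prod_prod, hPS, hPF]
  -- instances
  have hmJ : Measurable (fun ω => (S ω, X ω)) := hS.prodMk hX
  have hmK : Measurable (fun ω => (S ω, Y ω)) := hS.prodMk hY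
  have : IsProbabilityMeasure (μ.map fun ω => (S ω, X ω)) :=
    Measure.isProbabilityMeasure_map hmJ.aemeasurable
  have : IsProbabilityMeasure (μ.map fun ω => (S ω, Y ω)) :=
    Measure.isProbabilityMeasure_map hmK.aemeasurable
  have : IsProbabilityMeasure (μ.map S) := Measure.isProbabilityMeasure_map hS.aemeasurable
  have : IsProbabilityMeasure (μ.map X) := Measure.isProbabilityMeasure_map hX.aemeasurable
  have : IsProbabilityMeasure (μ.map Y) := Measure.isProbabilityMeasure_map hY.aemeasurable
  -- absolute continuity
  have hac1 : (μ.map fun ω => (S ω, X ω)) ≪ (μ.map S).prod (μ.map X) := by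
    refine ac_of_singletons fun p hp => ?_
    obtain ⟨s, x⟩ := p
    rw [hprod1] at hp
    rw [hJ]
    rcases mul_eq_zero.mp hp with h | h
    · exact measure_mono_null Set.inter_subset_left h
    · exact measure_mono_null Set.inter_subset_right h
  have hac2 : (μ.map fun ω => (S ω, Y ω)) ≪ (μ.map S).prod (μ.map Y) := by
    refine ac_of_singletons fun p hp => ?_
    obtain ⟨s, f⟩ := p
    rw [hprod2] at hp
    rw [hK]
    rcases mul_eq_zero.mp hp with h | h
    · exact measure_mono_null Set.inter_subset_left h
    · exact measure_mono_null Set.inter_subset_right h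
  rw [mutualInfo, mutualInfo, klDiv_fintype_eq _ _ hac1, klDiv_fintype_eq _ _ hac2]
  congr 1
  -- real-valued abbreviations
  set P : 𝒮 → 𝒳 → ℝ := fun s x => (μ (S ⁻¹' {s} ∩ X ⁻¹' {x})).toReal with hPdef
  set Q : 𝒮 → ℱ → ℝ := fun s f => (μ (S ⁻¹' {s} ∩ Y ⁻¹' {f})).toReal with hQdef
  set PS : 𝒮 → ℝ := fun s => (μ (S ⁻¹' {s})).toReal with hPSdef
  set PX : 𝒳 → ℝ := fun x => (μ (X ⁻¹' {x})).toReal with hPXdef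
  set PF : ℱ → ℝ := fun f => (μ (Y ⁻¹' {f})).toReal with hPFdef
  have key : ∀ s x, P s x * PF (g x) = Q s (g x) * PX x := fun s x =>
    key_identity μ S X hS hX g hg hCI s x
  have hsub : ∀ x : 𝒳, X ⁻¹' {x} ⊆ Y ⁻¹' {g x} := by
    intro x ω hω
    simp only [Set.mem_preimage, Set.mem_singleton_iff] at hω ⊢
    show g (X ω) = g x
    rw [hω]
  -- fiber decomposition
  have fiber : ∀ (s : 𝒮) (f : ℱ),
      Q s f = ∑ x ∈ Finset.univ.filter (fun x => g x = f), P s x := by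
    intro s f
    have hset : S ⁻¹' {s} ∩ Y ⁻¹' {f}
        = ⋃ x ∈ Finset.univ.filter (fun x => g x = f), (S ⁻¹' {s} ∩ X ⁻¹' {x}) := by
      ext ω
      simp only [Set.mem_inter_iff, Set.mem_preimage, Set.mem_singleton_iff,
        Set.mem_iUnion, Finset.mem_filter, Finset.mem_univ, true_and]
      constructor
      · rintro ⟨h1, h2⟩
        exact ⟨X ω, h2, h1, rfl⟩
      · rintro ⟨x, hx, h1, h2⟩
        refine ⟨h1, ?_⟩
        show g (X ω) = f
        rw [h2, hx]
    rw [hQdef]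
    simp only
    rw [hset, measure_biUnion_finset ?_ (fun x _ =>
        (hS (measurableSet_singleton s)).inter (hX (measurableSet_singleton x)))]
    · exact ENNReal.toReal_sum fun _ _ => measure_ne_top _ _
    · intro a _ b _ hab
      refine Set.disjoint_left.mpr fun ω h1 h2 => hab ?_
      have := h1.2
      have := h2.2
      simp only [Set.mem_preimage, Set.mem_singleton_iff] at *
      rw [← h1.2, ← h2.2]
  -- termwise log rewrite
  have hlog : ∀ (s : 𝒮) (x : 𝒳),
      P s x * Real.log (P s x / (PS s * PX x))
        = P s x * Real.log (Q s (g x) / (PS s * PF (g x))) := by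
    intro s x
    by_cases hP0 : μ (S ⁻¹' {s} ∩ X ⁻¹' {x}) = 0
    · have : P s x = 0 := by rw [hPdef]; simp [hP0]
      rw [this]
      ring
    · have hPpos : 0 < P s x := ENNReal.toReal_pos hP0 (measure_ne_top _ _)
      have hle1 : P s x ≤ PS s :=
        ENNReal.toReal_mono (measure_ne_top _ _) (measure_mono Set.inter_subset_left)
      have hle2 : P s x ≤ PX x :=
        ENNReal.toReal_mono (measure_ne_top _ _) (measure_mono Set.inter_subset_right)
      have hle3 : PX x ≤ PF (g x) :=
        ENNReal.toReal_mono (measure_ne_top _ _) (measure_mono (hsub x))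
      have hPSpos : 0 < PS s := lt_of_lt_of_le hPpos hle1
      have hPXpos : 0 < PX x := lt_of_lt_of_le hPpos hle2
      have hPFpos : 0 < PF (g x) := lt_of_lt_of_le hPXpos hle3
      have harg : P s x / (PS s * PX x) = Q s (g x) / (PS s * PF (g x)) := by
        rw [div_eq_div_iff (by positivity) (by positivity)]
        nlinarith [key s x]
      rw [harg]
  -- sums
  rw [Fintype.sum_prod_type, Fintype.sum_prod_type]
  have lhs_eq : ∀ s : 𝒮, ∀ x : 𝒳,
      ((μ.map fun ω => (S ω, X ω)) {(s, x)}).toReal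
          * Real.log (((μ.map fun ω => (S ω, X ω)) {(s, x)}).toReal
              / (((μ.map S).prod (μ.map X)) {(s, x)}).toReal)
        = P s x * Real.log (P s x / (PS s * PX x)) := by
    intro s x
    rw [hJ, hprod1, ENNReal.toReal_mul]
  calc ∑ s, ∑ x, ((μ.map fun ω => (S ω, X ω)) {(s, x)}).toReal
          * Real.log (((μ.map fun ω => (S ω, X ω)) {(s, x)}).toReal
              / (((μ.map S).prod (μ.map X)) {(s, x)}).toReal)
      = ∑ s, ∑ x, P s x * Real.log (Q s (g x) / (PS s * PF (g x))) := by
        refine Finset.sum_congr rfl fun s _ => Finset.sum_congr rfl fun x _ => ?_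
        rw [lhs_eq s x, hlog s x]
    _ = ∑ s, ∑ f, Q s f * Real.log (Q s f / (PS s * PF f)) := by
        refine Finset.sum_congr rfl fun s _ => ?_
        rw [← Finset.sum_fiberwise Finset.univ g
          (fun x => P s x * Real.log (Q s (g x) / (PS s * PF (g x))))]
        refine Finset.sum_congr rfl fun f _ => ?_
        have h1 : ∑ x ∈ Finset.univ.filter (fun x => g x = f),
              P s x * Real.log (Q s (g x) / (PS s * PF (g x)))
            = ∑ x ∈ Finset.univ.filter (fun x => g x = f),
              P s x * Real.log (Q s f / (PS s * PF f)) := by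
          refine Finset.sum_congr rfl fun x hx => ?_
          rw [(Finset.mem_filter.mp hx).2]
        rw [h1, ← Finset.sum_mul, ← fiber s f]
    _ = ∑ s, ∑ f, ((μ.map fun ω => (S ω, Y ω)) {(s, f)}).toReal
          * Real.log (((μ.map fun ω => (S ω, Y ω)) {(s, f)}).toReal
              / (((μ.map S).prod (μ.map Y)) {(s, f)}).toReal) := by
        refine Finset.sum_congr rfl fun s _ => Finset.sum_congr rfl fun f _ => ?_
        rw [hK, hprod2, ENNReal.toReal_mul]
end
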